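/- In the coinvariant group C(Ω,Z)/{f − f∘τ}, the class of the characteristic function of 2ⁿΩ + k equals the class of the characteristic function of 2ⁿΩ, and the class of the characteristic function of 2ⁿΩ equals 2 times the class of the characteristic function of 2^{n+1}Ω. -/

import Mathlib

/-- The set `2ⁿΩ + k` inside the dyadic integers. -/
def dyadicBall (n : ℕ) (k : ℤ_[2]) : Set ℤ_[2] := {x | ∃ y, x = 2 ^ n * y + k}

/-- The odometer `x ↦ x + 1` on the dyadic integers, as a continuous map. -/
noncomputable def tau : C(ℤ_[2], ℤ_[2]) := ⟨fun x => x + 1, by continuity⟩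

/-- The subgroup of `C(Ω, ℤ)` generated by the elements `f - f ∘ τ`. -/
noncomputable def coinvRel : AddSubgroup C(ℤ_[2], ℤ) :=
  AddSubgroup.closure {g | ∃ f : C(ℤ_[2], ℤ), g = f - f.comp tau}


lemma dyadicBall_eq (n : ℕ) (c : ℤ_[2]) :
    dyadicBall n c = Metric.closedBall c ((2:ℝ) ^ (-(n:ℤ))) := by
  ext x
  simp only [dyadicBall, Set.mem_setOf_eq, Metric.mem_closedBall, dist_eq_norm]
  rw [show ((2:ℝ) ^ (-(n:ℤ))) = (2:ℕ) ^ (-(n:ℤ)) by norm_num,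
    PadicInt.norm_le_pow_iff_mem_span_pow, Ideal.mem_span_singleton]
  constructor
  · rintro ⟨y, rfl⟩; exact ⟨y, by push_cast; ring⟩
  · rintro ⟨y, hy⟩; exact ⟨y, by push_cast at hy ⊢; linear_combination hy⟩

lemma isClopen_dyadicBall (n : ℕ) (c : ℤ_[2]) : IsClopen (dyadicBall n c) := by
  rw [dyadicBall_eq]
  exact IsUltrametricDist.isClopen_closedBall c (by positivity)

noncomputable def chi (n : ℕ) (c : ℤ_[2]) : C(ℤ_[2], ℤ) :=
  ⟨Set.indicator (dyadicBall n c) (fun _ => (1:ℤ)), by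
    have := (LocallyConstant.charFn ℤ (isClopen_dyadicBall n c)).continuous
    rwa [LocallyConstant.coe_charFn] at this⟩

lemma chi_apply (n : ℕ) (c : ℤ_[2]) (x : ℤ_[2]) :
    chi n c x = Set.indicator (dyadicBall n c) (fun _ => (1:ℤ)) x := rfl

lemma chi_step (n : ℕ) (c : ℤ_[2]) :
    (QuotientAddGroup.mk (chi n c) : C(ℤ_[2], ℤ) ⧸ coinvRel) = QuotientAddGroup.mk (chi n (c - 1)) := by
  rw [QuotientAddGroup.eq_iff_sub_mem]
  have hmem : ∀ x : ℤ_[2], x ∈ dyadicBall n (c - 1) ↔ x + 1 ∈ dyadicBall n c := by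
    intro x
    constructor
    · rintro ⟨y, rfl⟩; exact ⟨y, by ring⟩
    · rintro ⟨y, hy⟩; exact ⟨y, by linear_combination hy⟩
  have heq : chi n (c - 1) = (chi n c).comp tau := by
    ext x
    simp only [ContinuousMap.comp_apply, chi_apply, tau, ContinuousMap.coe_mk]
    by_cases hx : x ∈ dyadicBall n (c - 1)
    · rw [Set.indicator_of_mem hx, Set.indicator_of_mem ((hmem x).1 hx)]
    · rw [Set.indicator_of_notMem hx,
        Set.indicator_of_notMem (fun hc => hx ((hmem x).2 hc))]
  rw [heq]
  exact AddSubgroup.subset_closure ⟨chi n c, rfl⟩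

lemma chi_int (n : ℕ) (k : ℤ) :
    (QuotientAddGroup.mk (chi n (k : ℤ_[2])) : C(ℤ_[2], ℤ) ⧸ coinvRel) = QuotientAddGroup.mk (chi n 0) := by
  induction k using Int.induction_on with
  | zero => rw [Int.cast_zero]
  | succ k ih =>
    have h1 := chi_step n (((k : ℤ) : ℤ_[2]) + 1)
    rw [add_sub_cancel_right] at h1
    rw [show (((k : ℤ) + 1 : ℤ) : ℤ_[2]) = ((k : ℤ) : ℤ_[2]) + 1 by push_cast; ring, h1, ih]
  | pred k ih =>
    have h1 := chi_step n (((-k : ℤ) : ℤ_[2]))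
    rw [show ((-(k : ℤ) - 1 : ℤ) : ℤ_[2]) = ((-k : ℤ) : ℤ_[2]) - 1 by push_cast; ring, ← h1, ih]

/-- In the coinvariant group `C(Ω, ℤ)/{f - f∘τ}`, the class of `χ_{2ⁿΩ+k}`
equals the class of `χ_{2ⁿΩ}`, and the class of `χ_{2ⁿΩ}` equals twice the
class of `χ_{2ⁿ⁺¹Ω}`. -/
theorem stmt8 (n : ℕ) (k : ℤ) (f g h : C(ℤ_[2], ℤ))
    (hf : ∀ x, f x = Set.indicator (dyadicBall n (k : ℤ_[2])) (fun _ => (1 : ℤ)) x)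
    (hg : ∀ x, g x = Set.indicator (dyadicBall n 0) (fun _ => (1 : ℤ)) x)
    (hh : ∀ x, h x = Set.indicator (dyadicBall (n + 1) 0) (fun _ => (1 : ℤ)) x) :
    (QuotientAddGroup.mk f : C(ℤ_[2], ℤ) ⧸ coinvRel) = QuotientAddGroup.mk g ∧
    (QuotientAddGroup.mk g : C(ℤ_[2], ℤ) ⧸ coinvRel) = 2 • QuotientAddGroup.mk h := by
  have hfe : f = chi n (k : ℤ_[2]) := ContinuousMap.ext fun x => hf x
  have hge : g = chi n 0 := ContinuousMap.ext fun x => hg x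
  have hhe : h = chi (n+1) 0 := ContinuousMap.ext fun x => hh x
  subst hfe hge hhe
  refine ⟨chi_int n k, ?_⟩
  have h2norm : ‖(2 : ℤ_[2])‖ = 2⁻¹ := by
    have : ((2:ℕ) : ℤ_[2]) = (2 : ℤ_[2]) := by norm_num
    rw [← this, PadicInt.norm_p]; norm_num
  have hdecomp : chi n 0 = chi (n+1) 0 + chi (n+1) ((2:ℤ_[2])^n) := by
    ext x
    simp only [ContinuousMap.add_apply, chi_apply]
    by_cases h1 : x ∈ dyadicBall (n+1) (0 : ℤ_[2])
    · obtain ⟨y, hy⟩ := h1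
      have hm1 : x ∈ dyadicBall (n+1) (0 : ℤ_[2]) := ⟨y, hy⟩
      have h0 : x ∈ dyadicBall n (0 : ℤ_[2]) := ⟨2*y, by rw [hy]; ring⟩
      have h2 : x ∉ dyadicBall (n+1) ((2:ℤ_[2])^n) := by
        rintro ⟨z, hz⟩
        have hz0 : (2:ℤ_[2])^n * (2*y - 2*z - 1) = 0 := by
          rw [hy] at hz; linear_combination hz
        rcases mul_eq_zero.1 hz0 with h' | h'
        · exact absurd h' (pow_ne_zero n (by norm_num))
        · have hu : IsUnit (2 : ℤ_[2]) :=
            IsUnit.of_mul_eq_one (y - z) (by linear_combination h')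
          rw [PadicInt.isUnit_iff, h2norm] at hu
          norm_num at hu
      rw [Set.indicator_of_mem h0, Set.indicator_of_mem hm1, Set.indicator_of_notMem h2]
      norm_num
    · by_cases h2 : x ∈ dyadicBall (n+1) ((2:ℤ_[2])^n)
      · obtain ⟨z, hz⟩ := h2
        have hm2 : x ∈ dyadicBall (n+1) ((2:ℤ_[2])^n) := ⟨z, hz⟩
        have h0 : x ∈ dyadicBall n (0 : ℤ_[2]) := ⟨2*z+1, by rw [hz]; ring⟩
        rw [Set.indicator_of_mem h0, Set.indicator_of_notMem h1, Set.indicator_of_mem hm2]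
        norm_num
      · have h0 : x ∉ dyadicBall n (0 : ℤ_[2]) := by
          rintro ⟨y, hy⟩
          obtain ⟨z, hz⟩ := Ideal.mem_span_singleton.1 (y.appr_spec 1)
          have hr : y.appr 1 = 0 ∨ y.appr 1 = 1 := by
            have := y.appr_lt 1
            omega
          rcases hr with hr | hr
          · refine h1 ⟨z, ?_⟩
            rw [hr] at hz; push_cast at hz
            rw [hy, show y = 2 * z by linear_combination hz]; ring
          · refine h2 ⟨z, ?_⟩
            rw [hr] at hz; push_cast at hz
            rw [hy, show y = 2 * z + 1 by linear_combination hz]; ring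
        rw [Set.indicator_of_notMem h0, Set.indicator_of_notMem h1,
          Set.indicator_of_notMem h2]
        norm_num
  rw [hdecomp]
  have hadd : (QuotientAddGroup.mk (chi (n+1) 0 + chi (n+1) ((2:ℤ_[2])^n)) : C(ℤ_[2], ℤ) ⧸ coinvRel)
      = QuotientAddGroup.mk (chi (n+1) 0) + QuotientAddGroup.mk (chi (n+1) ((2:ℤ_[2])^n)) := rfl
  rw [hadd, show ((2:ℤ_[2])^n) = (((2:ℤ)^n : ℤ) : ℤ_[2]) by push_cast; ring, chi_int, two_nsmul]
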